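/- Let y_1 > y_2 > … > y_N and x_1 > x_2 > … > x_N be integers. Then det[F_{k,l}(x_{N+1−l} − y_{N+1−k}, 0, 0)]_{1≤k,l≤N} equals 1 if x_i = y_i for every i = 1,…,N, and equals 0 otherwise. -/

import Mathlib

open Complex MeasureTheory
open scoped Real
open Metric Finset

/-- `F N v k l x a b r` is the contour integral
`(1/(2πi)) ∮_{|z|=r} z^{x−1} e^{bz + a/z}
  (∏_{i=1}^{k−1} (1 − v_{N+1−i} z)) / (∏_{j=1}^{l−1} (1 − v_{N+1−j} z)) dz`. -/
noncomputable def F (N : ℕ) (v : ℕ → ℝ) (k l : ℕ) (x : ℤ) (a b r : ℝ) : ℂ :=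
  (2 * (Real.pi : ℂ) * Complex.I)⁻¹ *
    ∮ z in C(0, r), z ^ (x - 1) * Complex.exp ((b : ℂ) * z + (a : ℂ) / z) *
      (∏ i ∈ Finset.range (k - 1), (1 - (v (N - i) : ℂ) * z)) /
      ∏ j ∈ Finset.range (l - 1), (1 - (v (N - j) : ℂ) * z)

noncomputable def Jint (r : ℝ) (u : ℕ → ℂ) (t : ℕ) (x : ℤ) : ℂ :=
  (2 * (Real.pi : ℂ) * Complex.I)⁻¹ *
    ∮ z in C(0, r), z ^ (x - 1) * ∏ i ∈ Finset.range t, (1 - u i * z)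

lemma two_pi_I_ne : (2 * (Real.pi : ℂ) * Complex.I) ≠ 0 := by
  simp [Real.pi_ne_zero, Complex.I_ne_zero, Complex.ext_iff]

lemma sphere_ne_zero {r : ℝ} (hr : 0 < r) {z : ℂ} (hz : z ∈ sphere (0:ℂ) r) : z ≠ 0 := by
  rw [mem_sphere_zero_iff_norm] at hz
  intro h; rw [h] at hz; simp at hz; exact hr.ne' hz.symm

lemma cont_integrand {r : ℝ} (hr : 0 < r) (u : ℕ → ℂ) (t : ℕ) (x : ℤ) :
    ContinuousOn (fun z : ℂ => z ^ (x - 1) * ∏ i ∈ Finset.range t, (1 - u i * z))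
      (sphere (0:ℂ) r) := by
  apply ContinuousOn.mul
  · intro z hz
    exact (continuousAt_zpow₀ z (x-1) (Or.inl (sphere_ne_zero hr hz))).continuousWithinAt
  · exact (Continuous.continuousOn (by continuity))

lemma Jint_zero {r : ℝ} (hr : 0 < r) (u : ℕ → ℂ) (x : ℤ) :
    Jint r u 0 x = if x = 0 then 1 else 0 := by
  have h : (∮ z in C((0:ℂ), r), z ^ (x - 1) * ∏ i ∈ Finset.range 0, (1 - u i * z))
      = ∮ z in C((0:ℂ), r), z ^ (x-1) := by
    simp
  rw [Jint, h]
  split_ifs with hx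
  · subst hx
    have := circleIntegral.integral_sub_inv_of_mem_ball (c := 0) (w := 0) (R := r)
      (by simpa using hr)
    have h2 : (∮ z in C((0:ℂ), r), z ^ ((0:ℤ) - 1)) = ∮ z in C((0:ℂ), r), (z - 0)⁻¹ := by
      apply circleIntegral.integral_congr hr.le
      intro z hz; simp [zpow_neg_one]
    rw [h2, this]
    exact inv_mul_cancel₀ two_pi_I_ne
  · have := circleIntegral.integral_sub_zpow_of_ne (n := x - 1) (by omega) 0 0 r
    have h2 : (∮ z in C((0:ℂ), r), z ^ (x - 1)) = ∮ z in C((0:ℂ), r), (z - 0) ^ (x-1) := by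
      apply circleIntegral.integral_congr hr.le
      intro z hz; simp
    rw [h2, this, mul_zero]

lemma Jint_succ {r : ℝ} (hr : 0 < r) (u : ℕ → ℂ) (t : ℕ) (x : ℤ) :
    Jint r u (t + 1) x = Jint r u t x - u t * Jint r u t (x + 1) := by
  have key : (∮ z in C((0:ℂ), r), z ^ (x - 1) * ∏ i ∈ Finset.range (t+1), (1 - u i * z))
      = (∮ z in C((0:ℂ), r), z ^ (x - 1) * ∏ i ∈ Finset.range t, (1 - u i * z))
        - u t * ∮ z in C((0:ℂ), r), z ^ (x + 1 - 1) * ∏ i ∈ Finset.range t, (1 - u i * z) := by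
    have h1 : (∮ z in C((0:ℂ), r), z ^ (x - 1) * ∏ i ∈ Finset.range (t+1), (1 - u i * z))
        = ∮ z in C((0:ℂ), r), (z ^ (x - 1) * ∏ i ∈ Finset.range t, (1 - u i * z)
            - u t * (z ^ (x + 1 - 1) * ∏ i ∈ Finset.range t, (1 - u i * z))) := by
      apply circleIntegral.integral_congr hr.le
      intro z hz
      have hz0 : z ≠ 0 := sphere_ne_zero hr hz
      have hzz : z ^ (x - 1) * z = z ^ x := by
        rw [← zpow_add_one₀ hz0, sub_add_cancel]
      have hx1 : (z : ℂ) ^ (x + 1 - 1) = z ^ x := by norm_num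
      simp only [Finset.prod_range_succ, hx1]
      linear_combination (- u t * ∏ i ∈ Finset.range t, (1 - u i * z)) * hzz
    rw [h1, circleIntegral.integral_sub, circleIntegral.integral_const_mul]
    · exact (cont_integrand hr u t x).circleIntegrable hr.le
    · exact ((continuousOn_const).mul (cont_integrand hr u t (x+1))).circleIntegrable hr.le
  simp only [Jint, key]
  ring

lemma Jint_pos {r : ℝ} (hr : 0 < r) (u : ℕ → ℂ) (t : ℕ) (x : ℤ) (hx : 1 ≤ x) :
    Jint r u t x = 0 := by
  induction t generalizing x with
  | zero => rw [Jint_zero hr]; simp; omega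
  | succ t ih => rw [Jint_succ hr, ih x hx, ih (x+1) (by omega)]; ring

lemma Jint_neg {r : ℝ} (hr : 0 < r) (u : ℕ → ℂ) (t : ℕ) (x : ℤ) (hx : x < -(t:ℤ)) :
    Jint r u t x = 0 := by
  induction t generalizing x with
  | zero => rw [Jint_zero hr]; simp; omega
  | succ t ih =>
    rw [Jint_succ hr, ih x (by push_cast at hx ⊢; omega), ih (x+1) (by push_cast at hx ⊢; omega)]
    ring

lemma Jint_diag {r : ℝ} (hr : 0 < r) (u : ℕ → ℂ) (t : ℕ) :
    Jint r u t 0 = 1 := by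
  induction t with
  | zero => rw [Jint_zero hr]; simp
  | succ t ih => rw [Jint_succ hr, ih, Jint_pos hr u t (0+1) (by omega)]; ring


noncomputable def G (N : ℕ) (v : ℕ → ℝ) (K L : ℕ) (x : ℤ) (r : ℝ) : ℂ :=
  (2 * (Real.pi : ℂ) * Complex.I)⁻¹ *
    ∮ z in C(0, r), z ^ (x - 1) *
      (∏ i ∈ Finset.range K, (1 - (v (N - i) : ℂ) * z)) /
      ∏ j ∈ Finset.range L, (1 - (v (N - j) : ℂ) * z)

section props
variable {N : ℕ} {v : ℕ → ℝ} {r : ℝ}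
  (hv : ∀ i, 1 ≤ i → i ≤ N → 0 < v i)
  (hr : 0 < r) (hr' : ∀ j, 1 ≤ j → j ≤ N → r < 1 / v j)

include hv hr hr'

lemma factor_ne {j : ℕ} (hj : j < N) {z : ℂ} (hz : ‖z‖ ≤ r) :
    (1 : ℂ) - (v (N - j) : ℂ) * z ≠ 0 := by
  have h1 : 1 ≤ N - j := by omega
  have h2 : N - j ≤ N := by omega
  have hvp := hv _ h1 h2
  have hlt : v (N - j) * r < 1 := by
    have := hr' _ h1 h2
    rw [lt_div_iff₀ hvp] at this
    linarith [this]
  intro h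
  have : (v (N - j) : ℂ) * z = 1 := by linear_combination -h
  have habs : ‖(v (N - j) : ℂ) * z‖ = 1 := by rw [this]; simp
  rw [norm_mul, Complex.norm_real, Real.norm_eq_abs, abs_of_pos hvp] at habs
  nlinarith [norm_nonneg z, hz]

lemma G_eq_Jint {L t : ℕ} (hL : L ≤ N) (x : ℤ) :
    G N v (L + t) L x r = Jint r (fun i => (v (N - (L + i)) : ℂ)) t x := by
  rw [G, Jint]
  congr 1
  apply circleIntegral.integral_congr hr.le
  intro z hz
  have hzr : ‖z‖ ≤ r := by
    rw [mem_sphere_zero_iff_norm] at hz; exact hz.le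
  have hP : (∏ j ∈ Finset.range L, ((1:ℂ) - (v (N - j) : ℂ) * z)) ≠ 0 := by
    rw [Finset.prod_ne_zero_iff]
    intro j hj
    exact factor_ne hv hr hr' (by simp at hj; omega) hzr
  simp only [Finset.prod_range_add]
  rw [mul_comm (∏ j ∈ Finset.range L, ((1:ℂ) - (v (N - j) : ℂ) * z)), mul_div_assoc,
    mul_div_cancel_right₀ _ hP]

lemma G_pos_eq_zero {K L : ℕ} (hL : L ≤ N) {x : ℤ} (hx : 1 ≤ x) :
    G N v K L x r = 0 := by
  rw [G]
  have hfun : (fun z : ℂ => z ^ (x - 1) *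
      (∏ i ∈ Finset.range K, (1 - (v (N - i) : ℂ) * z)) /
      ∏ j ∈ Finset.range L, (1 - (v (N - j) : ℂ) * z))
    = fun z : ℂ => z ^ (x - 1).toNat *
      (∏ i ∈ Finset.range K, (1 - (v (N - i) : ℂ) * z)) /
      ∏ j ∈ Finset.range L, (1 - (v (N - j) : ℂ) * z) := by
    funext z
    rw [← zpow_natCast z (x-1).toNat, Int.toNat_of_nonneg (by omega)]
  rw [hfun]
  have hd : ∀ z ∈ closedBall (0:ℂ) r, DifferentiableAt ℂ (fun z : ℂ => z ^ (x - 1).toNat *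
      (∏ i ∈ Finset.range K, (1 - (v (N - i) : ℂ) * z)) /
      ∏ j ∈ Finset.range L, (1 - (v (N - j) : ℂ) * z)) z := by
    intro z hz
    rw [mem_closedBall, dist_zero_right] at hz
    apply DifferentiableAt.div
    · exact (differentiableAt_pow _).mul (DifferentiableAt.fun_finsetProd fun i _ =>
        (differentiableAt_const _).sub ((differentiableAt_const _).mul differentiableAt_id))
    · exact DifferentiableAt.fun_finsetProd fun i _ =>
        (differentiableAt_const _).sub ((differentiableAt_const _).mul differentiableAt_id)
    · rw [Finset.prod_ne_zero_iff]
      intro j hj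
      exact factor_ne hv hr hr' (by simp at hj; omega) hz
  rw [Complex.circleIntegral_eq_zero_of_differentiable_on_off_countable hr.le
    Set.countable_empty (fun z hz => (hd z hz).continuousAt.continuousWithinAt)
    (fun z hz => hd z (ball_subset_closedBall hz.1)), mul_zero]

end props

lemma strictMono_gap {N : ℕ} {f : Fin N → ℤ} (hf : StrictMono f) :
    ∀ (d : ℕ) (i j : Fin N), (j : ℕ) = (i : ℕ) + d → f i + (d : ℤ) ≤ f j := by
  intro d
  induction d with
  | zero =>
    intro i j hij
    have : i = j := Fin.ext (by omega)
    subst this; simp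
  | succ d ih =>
    intro i j hij
    have hlt : (i : ℕ) + d < N := by have := j.isLt; omega
    set j' : Fin N := ⟨(i : ℕ) + d, hlt⟩ with hj'
    have h1 : f i + (d : ℤ) ≤ f j' := ih i j' rfl
    have h2 : f j' < f j := hf (by rw [Fin.lt_def]; simp [hj']; omega)
    push_cast
    omega

lemma strictMono_gap' {N : ℕ} {f : Fin N → ℤ} (hf : StrictMono f) {i j : Fin N}
    (hij : i ≤ j) : f i + ((j : ℤ) - (i : ℤ)) ≤ f j := by
  have := strictMono_gap hf ((j : ℕ) - (i : ℕ)) i j (by omega)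
  push_cast at this ⊢
  omega


lemma F_eq_G (N : ℕ) (v : ℕ → ℝ) (K L : ℕ) (x : ℤ) (r : ℝ) :
    F N v (K + 1) (L + 1) x 0 0 r = G N v K L x r := by
  simp [F, G]

/-- for strictly decreasing integer vectors `y` and `x` (indexed so that
`y 0 > y 1 > ⋯` corresponds to `y_1 > y_2 > ⋯ > y_N`), the determinant
`det[F_{k,l}(x_{N+1−l} − y_{N+1−k}, 0, 0)]` is `1` if `x = y` and `0` otherwise. -/
theorem stmt1 (N : ℕ) (hN : 1 ≤ N) (v : ℕ → ℝ)
    (hv : ∀ i, 1 ≤ i → i ≤ N → 0 < v i)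
    (r : ℝ) (hr : 0 < r) (hr' : ∀ j, 1 ≤ j → j ≤ N → r < 1 / v j)
    (y x : Fin N → ℤ) (hy : StrictAnti y) (hx : StrictAnti x) :
    Matrix.det (Matrix.of fun k l : Fin N =>
        F N v ((k : ℕ) + 1) ((l : ℕ) + 1) (x l.rev - y k.rev) 0 0 r)
      = if ∀ i, x i = y i then 1 else 0 := by
  classical
  set a : Fin N → ℤ := fun i => x i.rev with ha
  set b : Fin N → ℤ := fun i => y i.rev with hb
  have hA : StrictMono a := fun i j hij => hx (Fin.rev_lt_rev.mpr hij)
  have hB : StrictMono b := fun i j hij => hy (Fin.rev_lt_rev.mpr hij)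
  have hM : ∀ k l : Fin N,
      (Matrix.of fun k l : Fin N =>
        F N v ((k : ℕ) + 1) ((l : ℕ) + 1) (x l.rev - y k.rev) 0 0 r) k l
      = G N v (k : ℕ) (l : ℕ) (a l - b k) r := by
    intro k l
    simp only [Matrix.of_apply]
    rw [F_eq_G]
  rw [Matrix.det_apply]
  rw [Finset.sum_eq_single_of_mem (1 : Equiv.Perm (Fin N)) (Finset.mem_univ _) ?_]
  · -- identity term
    simp only [Equiv.Perm.sign_one, one_smul, Equiv.Perm.one_apply]
    have hdiag : ∀ i : Fin N,
        (Matrix.of fun k l : Fin N =>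
          F N v ((k : ℕ) + 1) ((l : ℕ) + 1) (x l.rev - y k.rev) 0 0 r) i i
        = if x i.rev = y i.rev then 1 else 0 := by
      intro i
      rw [hM]
      have h0 := G_eq_Jint hv hr hr' (L := (i : ℕ)) (t := 0) (le_of_lt i.isLt) (a i - b i)
      rw [Nat.add_zero] at h0
      rw [h0, Jint_zero hr]
      simp only [sub_eq_zero, ha, hb]
    rw [Finset.prod_congr rfl fun i _ => hdiag i, Finset.prod_boole]
    congr 1
    simp only [Finset.mem_univ, true_implies, eq_iff_iff]
    constructor
    · intro h i
      have := h i.rev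
      rwa [Fin.rev_rev] at this
    · intro h i
      exact h i.rev
  · intro σ _ hσ
    suffices h : (∏ i, (Matrix.of fun k l : Fin N =>
        F N v ((k : ℕ) + 1) ((l : ℕ) + 1) (x l.rev - y k.rev) 0 0 r) (σ i) i) = 0 by
      rw [h, smul_zero]
    by_contra hne
    have hfac : ∀ i : Fin N, G N v ((σ i : Fin N) : ℕ) (i : ℕ) (a i - b (σ i)) r ≠ 0 := by
      intro i
      have := Finset.prod_ne_zero_iff.mp hne i (Finset.mem_univ i)
      rwa [hM] at this
    -- the set of non-fixed points
    set S : Finset (Fin N) := Finset.univ.filter (fun i => σ i ≠ i) with hS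
    have hSne : S.Nonempty := by
      have hex : ∃ i, σ i ≠ i := by
        by_contra h
        push_neg at h
        exact hσ (Equiv.ext h)
      obtain ⟨i, hii⟩ := hex
      exact ⟨i, by rw [hS, Finset.mem_filter]; exact ⟨Finset.mem_univ _, hii⟩⟩
    set i₀ : Fin N := S.max' hSne with hi₀
    have hmem : σ i₀ ≠ i₀ :=
      (Finset.mem_filter.mp (S.max'_mem hSne)).2
    have hmax : ∀ j : Fin N, i₀ < j → σ j = j := by
      intro j hj
      by_contra hjj
      have : j ∈ S := by rw [hS, Finset.mem_filter]; exact ⟨Finset.mem_univ _, hjj⟩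
      exact absurd (S.le_max' j this) (not_le.mpr hj)
    have hσlt : σ i₀ < i₀ := by
      rcases lt_or_gt_of_ne hmem with h | h
      · exact h
      · exact absurd (σ.injective (hmax (σ i₀) h)) hmem
    set i₁ : Fin N := σ⁻¹ i₀ with hi₁
    have hσi₁ : σ i₁ = i₀ := Equiv.apply_symm_apply σ i₀
    have hi₁lt : i₁ < i₀ := by
      rcases lt_trichotomy i₁ i₀ with h | h | h
      · exact h
      · exact absurd (h ▸ hσi₁) hmem
      · have := hmax i₁ h
        rw [hσi₁] at this
        exact absurd this (ne_of_lt h)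
    -- fact 1 : a i₀ ≤ b (σ i₀)
    have f1 : a i₀ ≤ b (σ i₀) := by
      by_contra hc
      exact hfac i₀ (G_pos_eq_zero hv hr hr' (le_of_lt i₀.isLt) (by omega))
    -- fact 2 : b i₀ ≤ a i₁ + (i₀ - i₁)
    have f2 : b i₀ ≤ a i₁ + (((i₀ : ℕ) : ℤ) - ((i₁ : ℕ) : ℤ)) := by
      by_contra hc
      apply hfac i₁
      have ht : (i₁ : ℕ) + ((i₀ : ℕ) - (i₁ : ℕ)) = (i₀ : ℕ) := by
        have : (i₁ : ℕ) < (i₀ : ℕ) := hi₁lt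
        omega
      have h2 := G_eq_Jint hv hr hr' (L := (i₁ : ℕ)) (t := (i₀ : ℕ) - (i₁ : ℕ))
        (le_of_lt i₁.isLt) (a i₁ - b (σ i₁))
      rw [ht] at h2
      rw [hσi₁] at h2 ⊢
      rw [h2]
      apply Jint_neg hr
      have : (i₁ : ℕ) < (i₀ : ℕ) := hi₁lt
      push_cast
      omega
    -- gaps
    have g1 : b (σ i₀) + (((i₀ : ℕ) : ℤ) - ((σ i₀ : Fin N) : ℤ)) ≤ b i₀ :=
      strictMono_gap' hB (le_of_lt hσlt)
    have g2 : a i₁ + (((i₀ : ℕ) : ℤ) - ((i₁ : ℕ) : ℤ)) ≤ a i₀ :=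
      strictMono_gap' hA (le_of_lt hi₁lt)
    have hσlt' : ((σ i₀ : Fin N) : ℕ) < (i₀ : ℕ) := hσlt
    omega
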